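/- Fix finite sets X, Y, a finite output set Z, a set S ⊆ X × Y of valid inputs, a function f : S → Z, and ε ∈ [0,1]. Then the maximum over probability distributions μ on X × Y of the optimal value of the μ-primal program (minimize ∑_{R,z} w_{R,z} over nonnegative families w subject to ∑_{(x,y) ∈ S} μ(x,y) ∑_{R ∋ (x,y)} w_{R,f(x,y)} + ∑_{(x,y) ∉ S} μ(x,y) ∑_{z} ∑_{R ∋ (x,y)} w_{R,z} ≥ 1 − ε and, for every (x,y), ∑_{z} ∑_{R ∋ (x,y)} w_{R,z} ≤ 1) equals the minimum of ∑_{R,z} w_{R,z} over families w that are ε-feasible for the relaxed partition bound of f. In particular, for every μ and every ε-feasible family w for the relaxed partition bound, w is feasible for the μ-primal program, and there exists a distribution μ* at which the two optimal values coincide. -/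

import Mathlib

open Finset

/-- Membership of an input pair in a rectangle (encoded as a pair of finsets). -/
def MemRect {X Y : Type*} (p : X × Y) (R : Finset X × Finset Y) : Prop :=
  p.1 ∈ R.1 ∧ p.2 ∈ R.2

instance {X Y : Type*} [DecidableEq X] [DecidableEq Y] (p : X × Y) (R : Finset X × Finset Y) :
    Decidable (MemRect p R) := by unfold MemRect; infer_instance

/-- `∑_{R ∋ p} w_{R,z}`. -/
noncomputable def coverSum {X Y Z : Type*} [Fintype X] [Fintype Y]
    [DecidableEq X] [DecidableEq Y]
    (w : Finset X × Finset Y → Z → ℝ) (p : X × Y) (z : Z) : ℝ :=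
  ∑ R ∈ univ.filter (fun R => MemRect p R), w R z

/-- A family `w` is `ε`-feasible for the relaxed partition bound of `f` (valid inputs `S`). -/
def RelaxedFeasible {X Y Z : Type*} [Fintype X] [Fintype Y] [Fintype Z]
    [DecidableEq X] [DecidableEq Y]
    (S : Finset (X × Y)) (f : X × Y → Z) (ε : ℝ)
    (w : Finset X × Finset Y → Z → ℝ) : Prop :=
  (∀ R z, 0 ≤ w R z) ∧
  (∀ p ∈ S, 1 - ε ≤ coverSum w p (f p)) ∧
  (∀ p ∉ S, 1 - ε ≤ ∑ z, coverSum w p z) ∧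
  (∀ p : X × Y, ∑ z, coverSum w p z ≤ 1)

/-- The objective value `∑_{R,z} w_{R,z}`. -/
noncomputable def totalWeight {X Y Z : Type*} [Fintype X] [Fintype Y] [Fintype Z]
    [DecidableEq X] [DecidableEq Y]
    (w : Finset X × Finset Y → Z → ℝ) : ℝ :=
  ∑ R : Finset X × Finset Y, ∑ z : Z, w R z

/-- Feasibility for the `μ`-primal program of the distributional relaxed partition bound. -/
def MuPrimalFeasible {X Y Z : Type*} [Fintype X] [Fintype Y] [Fintype Z]
    [DecidableEq X] [DecidableEq Y]
    (S : Finset (X × Y)) (f : X × Y → Z) (ε : ℝ) (μ : X × Y → ℝ)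
    (w : Finset X × Finset Y → Z → ℝ) : Prop :=
  (∀ R z, 0 ≤ w R z) ∧
  (1 - ε ≤ ∑ p ∈ S, μ p * coverSum w p (f p) + ∑ p ∈ Sᶜ, μ p * ∑ z, coverSum w p z) ∧
  (∀ p : X × Y, ∑ z, coverSum w p z ≤ 1)

/-- A probability distribution on the (finite) input set. -/
def IsProbDist {X Y : Type*} [Fintype X] [Fintype Y] (μ : X × Y → ℝ) : Prop :=
  (∀ p, 0 ≤ μ p) ∧ ∑ p, μ p = 1

/-- The optimal value of the `μ`-primal program (the distributional relaxed partition
bound `bprt^μ_ε(f)`). -/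
noncomputable def muPrimalValue {X Y Z : Type*} [Fintype X] [Fintype Y] [Fintype Z]
    [DecidableEq X] [DecidableEq Y]
    (S : Finset (X × Y)) (f : X × Y → Z) (ε : ℝ) (μ : X × Y → ℝ) : ℝ :=
  sInf {v : ℝ | ∃ w : Finset X × Finset Y → Z → ℝ,
    MuPrimalFeasible S f ε μ w ∧ v = totalWeight w}

/-- The relaxed partition bound `bprt_ε(f)` (primal form). -/
noncomputable def bprt {X Y Z : Type*} [Fintype X] [Fintype Y] [Fintype Z]
    [DecidableEq X] [DecidableEq Y]
    (S : Finset (X × Y)) (f : X × Y → Z) (ε : ℝ) : ℝ :=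
  sInf {v : ℝ | ∃ w : Finset X × Finset Y → Z → ℝ,
    RelaxedFeasible S f ε w ∧ v = totalWeight w}


section Aux

open Finset
open scoped Classical
set_option linter.unusedSectionVars false

variable {X Y Z : Type*} [Fintype X] [Fintype Y] [Fintype Z]
  [DecidableEq X] [DecidableEq Y]

/-- The per-input "success" quantity. -/
noncomputable def gp (S : Finset (X × Y)) (f : X × Y → Z)
    (w : Finset X × Finset Y → Z → ℝ) (p : X × Y) : ℝ :=
  if p ∈ S then coverSum w p (f p) else ∑ z, coverSum w p z

lemma coverSum_nonneg {w : Finset X × Finset Y → Z → ℝ} (hw : ∀ R z, 0 ≤ w R z)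
    (p : X × Y) (z : Z) : 0 ≤ coverSum w p z :=
  Finset.sum_nonneg fun R _ => hw R z

lemma totalWeight_nonneg {w : Finset X × Finset Y → Z → ℝ} (hw : ∀ R z, 0 ≤ w R z) :
    0 ≤ totalWeight w :=
  Finset.sum_nonneg fun R _ => Finset.sum_nonneg fun z _ => hw R z

lemma coverSum_combo (a b : ℝ) (w w' : Finset X × Finset Y → Z → ℝ) (p : X × Y) (z : Z) :
    coverSum (fun R z => a * w R z + b * w' R z) p z
      = a * coverSum w p z + b * coverSum w' p z := by
  simp [coverSum, Finset.sum_add_distrib, Finset.mul_sum]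

lemma totalWeight_combo (a b : ℝ) (w w' : Finset X × Finset Y → Z → ℝ) :
    totalWeight (fun R z => a * w R z + b * w' R z)
      = a * totalWeight w + b * totalWeight w' := by
  simp [totalWeight, Finset.sum_add_distrib, Finset.mul_sum]

lemma gp_combo (S : Finset (X × Y)) (f : X × Y → Z) (a b : ℝ)
    (w w' : Finset X × Finset Y → Z → ℝ) (p : X × Y) :
    gp S f (fun R z => a * w R z + b * w' R z) p = a * gp S f w p + b * gp S f w' p := by
  unfold gp
  by_cases hp : p ∈ S <;>
    simp [hp, coverSum_combo, Finset.sum_add_distrib, Finset.mul_sum]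

lemma gp_nonneg {S : Finset (X × Y)} {f : X × Y → Z} {w : Finset X × Finset Y → Z → ℝ}
    (hw : ∀ R z, 0 ≤ w R z) (p : X × Y) : 0 ≤ gp S f w p := by
  unfold gp
  by_cases hp : p ∈ S <;>
    simp [hp, coverSum_nonneg hw, Finset.sum_nonneg fun z _ => coverSum_nonneg hw p z]

lemma gp_le_one {S : Finset (X × Y)} {f : X × Y → Z} {w : Finset X × Finset Y → Z → ℝ}
    (hw : ∀ R z, 0 ≤ w R z) (hw1 : ∀ p : X × Y, ∑ z, coverSum w p z ≤ 1) (p : X × Y) :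
    gp S f w p ≤ 1 := by
  unfold gp
  by_cases hp : p ∈ S
  · simp only [hp, if_true]
    calc coverSum w p (f p) ≤ ∑ z, coverSum w p z :=
          Finset.single_le_sum (fun z _ => coverSum_nonneg hw p z) (Finset.mem_univ _)
      _ ≤ 1 := hw1 p
  · simpa [hp] using hw1 p

lemma sum_mu_gp (S : Finset (X × Y)) (f : X × Y → Z) (μ : X × Y → ℝ)
    (w : Finset X × Finset Y → Z → ℝ) :
    ∑ p ∈ S, μ p * coverSum w p (f p) + ∑ p ∈ Sᶜ, μ p * ∑ z, coverSum w p z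
      = ∑ p : X × Y, μ p * gp S f w p := by
  rw [← Finset.sum_add_sum_compl S (fun p => μ p * gp S f w p)]
  congr 1
  · exact Finset.sum_congr rfl fun p hp => by simp [gp, hp]
  · exact Finset.sum_congr rfl fun p hp => by
      simp [gp, (Finset.mem_compl.mp hp)]

/-- The base family putting weight 1 on each singleton rectangle with the "right" output. -/
noncomputable def wBase (f : X × Y → Z) : Finset X × Finset Y → Z → ℝ :=
  fun R z => ∑ p : X × Y, if (({p.1}, {p.2}) = R ∧ f p = z) then 1 else 0

lemma wBase_nonneg (f : X × Y → Z) : ∀ R z, 0 ≤ wBase f R z := fun R z =>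
  Finset.sum_nonneg fun p _ => by split <;> norm_num

lemma coverSum_wBase (f : X × Y → Z) (p : X × Y) (z : Z) :
    coverSum (wBase f) p z = if f p = z then 1 else 0 := by
  unfold coverSum wBase
  rw [Finset.sum_comm]
  have h1 : ∀ q : X × Y,
      (∑ R ∈ Finset.univ.filter (fun R => MemRect p R),
        if (({q.1}, {q.2}) = R ∧ f q = z) then (1:ℝ) else 0)
      = if q = p then (if f q = z then (1:ℝ) else 0) else 0 := by
    intro q
    have hmem : ((({q.1}, {q.2}) : Finset X × Finset Y) ∈
        Finset.univ.filter (fun R => MemRect p R)) ↔ q = p := by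
      rw [Finset.mem_filter]
      simp only [Finset.mem_univ, true_and, MemRect, Finset.mem_singleton, Prod.ext_iff]
      exact ⟨fun h => ⟨h.1.symm, h.2.symm⟩, fun h => ⟨h.1.symm, h.2.symm⟩⟩
    simp only [ite_and]
    rw [Finset.sum_ite_eq]
    by_cases hq : q = p
    · subst hq; rw [if_pos (hmem.mpr rfl), if_pos rfl]
    · rw [if_neg (fun h => hq (hmem.mp h)), if_neg hq]
  rw [Finset.sum_congr rfl (fun q _ => h1 q)]
  rw [Finset.sum_ite_eq' Finset.univ p (fun q => if f q = z then (1:ℝ) else 0)]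
  simp

lemma sum_coverSum_wBase (f : X × Y → Z) (p : X × Y) :
    ∑ z, coverSum (wBase f) p z = 1 := by
  simp only [coverSum_wBase]
  rw [Finset.sum_ite_eq Finset.univ (f p) (fun _ => (1:ℝ))]
  simp

lemma gp_wBase (S : Finset (X × Y)) (f : X × Y → Z) (p : X × Y) :
    gp S f (wBase f) p = 1 := by
  unfold gp
  by_cases hp : p ∈ S <;> simp [hp, coverSum_wBase, sum_coverSum_wBase]

lemma wBase_relaxedFeasible (S : Finset (X × Y)) (f : X × Y → Z) {ε : ℝ} (hε : 0 ≤ ε) :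
    RelaxedFeasible S f ε (wBase f) := by
  refine ⟨wBase_nonneg f, fun p _ => ?_, fun p _ => ?_, fun p => ?_⟩
  · rw [coverSum_wBase, if_pos rfl]; linarith
  · rw [sum_coverSum_wBase]; linarith
  · rw [sum_coverSum_wBase]

lemma relaxed_to_mu (S : Finset (X × Y)) (f : X × Y → Z) (ε : ℝ)
    (μ : X × Y → ℝ) (hμ : IsProbDist μ)
    (w : Finset X × Finset Y → Z → ℝ) (hw : RelaxedFeasible S f ε w) :
    MuPrimalFeasible S f ε μ w := by
  obtain ⟨hw0, hwS, hwSc, hw1⟩ := hw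
  refine ⟨hw0, ?_, hw1⟩
  rw [sum_mu_gp]
  have h1 : ∀ p : X × Y, μ p * (1 - ε) ≤ μ p * gp S f w p := by
    intro p
    apply mul_le_mul_of_nonneg_left _ (hμ.1 p)
    unfold gp
    by_cases hp : p ∈ S
    · simpa [hp] using hwS p hp
    · simpa [hp] using hwSc p hp
  calc 1 - ε = ∑ p : X × Y, μ p * (1 - ε) := by
        rw [← Finset.sum_mul, hμ.2, one_mul]
    _ ≤ ∑ p : X × Y, μ p * gp S f w p := Finset.sum_le_sum fun p _ => h1 p

variable (S : Finset (X × Y)) (f : X × Y → Z) (ε : ℝ)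

lemma bddBelow_muSet (μ : X × Y → ℝ) :
    BddBelow {v : ℝ | ∃ w : Finset X × Finset Y → Z → ℝ,
      MuPrimalFeasible S f ε μ w ∧ v = totalWeight w} := by
  refine ⟨0, fun v hv => ?_⟩
  obtain ⟨w, hw, rfl⟩ := hv
  exact totalWeight_nonneg hw.1

lemma bddBelow_relaxedSet :
    BddBelow {v : ℝ | ∃ w : Finset X × Finset Y → Z → ℝ,
      RelaxedFeasible S f ε w ∧ v = totalWeight w} := by
  refine ⟨0, fun v hv => ?_⟩
  obtain ⟨w, hw, rfl⟩ := hv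
  exact totalWeight_nonneg hw.1

lemma relaxedSet_nonempty (hε : 0 ≤ ε) :
    Set.Nonempty {v : ℝ | ∃ w : Finset X × Finset Y → Z → ℝ,
      RelaxedFeasible S f ε w ∧ v = totalWeight w} :=
  ⟨totalWeight (wBase f), wBase f, wBase_relaxedFeasible S f hε, rfl⟩

lemma muSet_nonempty (hε : 0 ≤ ε) (μ : X × Y → ℝ) (hμ : IsProbDist μ) :
    Set.Nonempty {v : ℝ | ∃ w : Finset X × Finset Y → Z → ℝ,
      MuPrimalFeasible S f ε μ w ∧ v = totalWeight w} :=
  ⟨totalWeight (wBase f), wBase f,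
    relaxed_to_mu S f ε μ hμ _ (wBase_relaxedFeasible S f hε), rfl⟩

lemma bprt_le {w : Finset X × Finset Y → Z → ℝ} (hw : RelaxedFeasible S f ε w) :
    bprt S f ε ≤ totalWeight w :=
  csInf_le (bddBelow_relaxedSet S f ε) ⟨w, hw, rfl⟩

lemma muPrimalValue_le {μ : X × Y → ℝ} {w : Finset X × Finset Y → Z → ℝ}
    (hw : MuPrimalFeasible S f ε μ w) :
    muPrimalValue S f ε μ ≤ totalWeight w :=
  csInf_le (bddBelow_muSet S f ε μ) ⟨w, hw, rfl⟩

lemma le_muPrimalValue (hε : 0 ≤ ε) {μ : X × Y → ℝ} (hμ : IsProbDist μ) {c : ℝ}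
    (h : ∀ w : Finset X × Finset Y → Z → ℝ, MuPrimalFeasible S f ε μ w → c ≤ totalWeight w) :
    c ≤ muPrimalValue S f ε μ := by
  refine le_csInf (muSet_nonempty S f ε hε μ hμ) ?_
  rintro v ⟨w, hw, rfl⟩
  exact h w hw

lemma bprt_nonneg (hε : 0 ≤ ε) : 0 ≤ bprt S f ε := by
  refine le_csInf (relaxedSet_nonempty S f ε hε) ?_
  rintro v ⟨w, hw, rfl⟩
  exact totalWeight_nonneg hw.1

lemma muPrimalValue_le_bprt (hε : 0 ≤ ε) (μ : X × Y → ℝ) (hμ : IsProbDist μ) :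
    muPrimalValue S f ε μ ≤ bprt S f ε := by
  refine csInf_le_csInf (bddBelow_muSet S f ε μ) (relaxedSet_nonempty S f ε hε) ?_
  rintro v ⟨w, hw, rfl⟩
  exact ⟨w, relaxed_to_mu S f ε μ hμ w hw, rfl⟩

/-- The uniform distribution. -/
noncomputable def unif : X × Y → ℝ := fun _ => (Fintype.card (X × Y) : ℝ)⁻¹

lemma unif_isProbDist [Nonempty X] [Nonempty Y] : IsProbDist (unif (X := X) (Y := Y)) := by
  have hcard : (0 : ℝ) < (Fintype.card (X × Y) : ℝ) := by
    exact_mod_cast Fintype.card_pos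
  constructor
  · intro p; unfold unif; positivity
  · unfold unif
    rw [Finset.sum_const, Finset.card_univ, nsmul_eq_mul]
    exact mul_inv_cancel₀ hcard.ne'

lemma eps_zero_feasible_iff [Nonempty X] [Nonempty Y]
    (w : Finset X × Finset Y → Z → ℝ) :
    MuPrimalFeasible S f 0 (unif (X := X) (Y := Y)) w ↔ RelaxedFeasible S f 0 w := by
  have hcard : (0 : ℝ) < (Fintype.card (X × Y) : ℝ) := by
    exact_mod_cast Fintype.card_pos
  constructor
  · rintro ⟨hw0, hcon, hw1⟩
    have hgp : ∀ p : X × Y, gp S f w p = 1 := by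
      rw [sum_mu_gp] at hcon
      have hle : ∀ p ∈ Finset.univ, unif (X := X) (Y := Y) p * gp S f w p
          ≤ unif (X := X) (Y := Y) p * 1 := by
        intro p _
        exact mul_le_mul_of_nonneg_left (gp_le_one hw0 hw1 p) (unif_isProbDist.1 p)
      have hsum : ∑ p : X × Y, unif (X := X) (Y := Y) p * 1 = 1 := by
        simpa using (unif_isProbDist (X := X) (Y := Y)).2
      have heq : ∑ p : X × Y, unif (X := X) (Y := Y) p * gp S f w p
          = ∑ p : X × Y, unif (X := X) (Y := Y) p * 1 := by
        have := Finset.sum_le_sum hle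
        rw [hsum] at this ⊢
        linarith
      have := (Finset.sum_eq_sum_iff_of_le hle).mp heq
      intro p
      have hp := this p (Finset.mem_univ p)
      have hu : unif (X := X) (Y := Y) p ≠ 0 := by
        unfold unif; positivity
      exact mul_left_cancel₀ hu hp
    refine ⟨hw0, fun p hp => ?_, fun p hp => ?_, hw1⟩
    · have := hgp p; unfold gp at this; rw [if_pos hp] at this; linarith
    · have := hgp p; unfold gp at this; rw [if_neg hp] at this; linarith
  · exact relaxed_to_mu S f 0 _ unif_isProbDist w

lemma eps_zero_value [Nonempty X] [Nonempty Y] :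
    muPrimalValue S f 0 (unif (X := X) (Y := Y)) = bprt S f 0 := by
  unfold muPrimalValue bprt
  congr 1
  ext v
  constructor
  · rintro ⟨w, hw, rfl⟩; exact ⟨w, (eps_zero_feasible_iff S f w).mp hw, rfl⟩
  · rintro ⟨w, hw, rfl⟩; exact ⟨w, (eps_zero_feasible_iff S f w).mpr hw, rfl⟩

lemma exists_mu_near [Nonempty X] [Nonempty Y] (hε0 : 0 < ε) {δ : ℝ} (hδ : 0 < δ) :
    ∃ μ : X × Y → ℝ, IsProbDist μ ∧ bprt S f ε - δ ≤ muPrimalValue S f ε μ := by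
  classical
  set v : ℝ := bprt S f ε with hv
  set K : ℝ := totalWeight (wBase f) with hKdef
  have hK0 : 0 ≤ K := totalWeight_nonneg (wBase_nonneg f)
  set C : Set (((X × Y) → ℝ) × ℝ) :=
    {y | ∃ w : Finset X × Finset Y → Z → ℝ,
      (∀ R z, 0 ≤ w R z) ∧ (∀ p : X × Y, ∑ z, coverSum w p z ≤ 1) ∧
      (∀ p : X × Y, y.1 p ≤ gp S f w p) ∧ totalWeight w ≤ y.2} with hCdef
  -- convexity of C
  have hCconv : Convex ℝ C := by
    rintro y ⟨w, hw0, hw1, hwg, hwt⟩ y' ⟨w', hw0', hw1', hwg', hwt'⟩ a b ha hb hab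
    refine ⟨fun R z => a * w R z + b * w' R z, ?_, ?_, ?_, ?_⟩
    · intro R z
      exact add_nonneg (mul_nonneg ha (hw0 R z)) (mul_nonneg hb (hw0' R z))
    · intro p
      have hsum : ∑ z, coverSum (fun R z => a * w R z + b * w' R z) p z
          = a * (∑ z, coverSum w p z) + b * (∑ z, coverSum w' p z) := by
        simp [coverSum_combo, Finset.sum_add_distrib, Finset.mul_sum]
      rw [hsum]
      calc a * (∑ z, coverSum w p z) + b * (∑ z, coverSum w' p z)
          ≤ a * 1 + b * 1 :=
            add_le_add (mul_le_mul_of_nonneg_left (hw1 p) ha)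
              (mul_le_mul_of_nonneg_left (hw1' p) hb)
        _ = 1 := by linarith
    · intro p
      rw [gp_combo]
      have hfst : (a • y + b • y').1 p = a * y.1 p + b * y'.1 p := rfl
      rw [hfst]
      exact add_le_add (mul_le_mul_of_nonneg_left (hwg p) ha)
        (mul_le_mul_of_nonneg_left (hwg' p) hb)
    · rw [totalWeight_combo]
      have hsnd : (a • y + b • y').2 = a * y.2 + b * y'.2 := rfl
      rw [hsnd]
      exact add_le_add (mul_le_mul_of_nonneg_left hwt ha)
        (mul_le_mul_of_nonneg_left hwt' hb)
  -- the target point is not in the closure of C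
  have hxnot : (((fun _ => 1 - ε) : (X × Y) → ℝ), v - δ) ∉ closure C := by
    intro hmem
    set γ : ℝ := min (δ / 2) (ε * δ / (4 * (K + 1))) with hγdef
    have hγ0 : 0 < γ := lt_min (by linarith) (by positivity)
    have hγδ : γ ≤ δ / 2 := min_le_left _ _
    have hγε : γ ≤ ε * δ / (4 * (K + 1)) := min_le_right _ _
    rw [Metric.mem_closure_iff] at hmem
    obtain ⟨b, hbC, hdist⟩ := hmem γ hγ0
    obtain ⟨w, hw0, hw1, hwg, hwt⟩ := hbC
    have hd1 : dist ((fun _ => 1 - ε) : (X × Y) → ℝ) b.1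
        ≤ dist ((((fun _ => 1 - ε) : (X × Y) → ℝ), v - δ)) b := by
      rw [Prod.dist_eq]; exact le_max_left _ _
    have hd2 : dist (v - δ) b.2
        ≤ dist ((((fun _ => 1 - ε) : (X × Y) → ℝ), v - δ)) b := by
      rw [Prod.dist_eq]; exact le_max_right _ _
    have hb1 : ∀ p : X × Y, 1 - ε - γ < b.1 p := by
      intro p
      have h3 : dist (1 - ε) (b.1 p) < γ :=
        lt_of_le_of_lt ((dist_le_pi_dist _ _ p).trans hd1) hdist
      rw [Real.dist_eq] at h3
      have := abs_lt.mp h3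
      linarith [this.1, this.2]
    have hb2 : b.2 < v - δ + γ := by
      have h3 : dist (v - δ) b.2 < γ := lt_of_le_of_lt hd2 hdist
      rw [Real.dist_eq] at h3
      have := abs_lt.mp h3
      linarith [this.1, this.2]
    have htw0 : 0 ≤ totalWeight w := totalWeight_nonneg hw0
    -- mixing parameter
    have hεγ : 0 < ε + γ := by linarith
    set η : ℝ := γ / (ε + γ) with hηdef
    have hη0 : 0 ≤ η := div_nonneg hγ0.le hεγ.le
    have hη1 : η ≤ 1 := by
      rw [hηdef, div_le_one hεγ]; linarith
    have hηe : η * (ε + γ) = γ := div_mul_cancel₀ _ hεγ.ne'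
    set w2 : Finset X × Finset Y → Z → ℝ :=
      fun R z => (1 - η) * w R z + η * wBase f R z with hw2def
    have hgp2 : ∀ p : X × Y, 1 - ε ≤ gp S f w2 p := by
      intro p
      rw [hw2def, gp_combo, gp_wBase]
      have h4 : (1 - η) * (1 - ε - γ) ≤ (1 - η) * gp S f w p := by
        apply mul_le_mul_of_nonneg_left _ (by linarith)
        exact le_trans (hb1 p).le (hwg p)
      have h5 : (1 - η) * (1 - ε - γ) + η * 1 = 1 - ε := by linear_combination hηe
      linarith
    have hw2feas : RelaxedFeasible S f ε w2 := by
      refine ⟨?_, ?_, ?_, ?_⟩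
      · intro R z
        exact add_nonneg (mul_nonneg (by linarith) (hw0 R z))
          (mul_nonneg hη0 (wBase_nonneg f R z))
      · intro p hp
        have := hgp2 p; unfold gp at this; rwa [if_pos hp] at this
      · intro p hp
        have := hgp2 p; unfold gp at this; rwa [if_neg hp] at this
      · intro p
        have hsum : ∑ z, coverSum w2 p z
            = (1 - η) * (∑ z, coverSum w p z) + η * (∑ z, coverSum (wBase f) p z) := by
          simp [hw2def, coverSum_combo, Finset.sum_add_distrib, Finset.mul_sum]
        rw [hsum, sum_coverSum_wBase]
        nlinarith [hw1 p]
    have hvle : v ≤ totalWeight w2 := bprt_le S f ε hw2feas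
    have htw2 : totalWeight w2 = (1 - η) * totalWeight w + η * K := by
      rw [hw2def, totalWeight_combo, hKdef]
    -- bound η * K ≤ δ / 4
    have hη2 : η ≤ γ / ε := by
      apply div_le_div_of_nonneg_left hγ0.le hε0
      linarith
    have hγK : γ / ε * K ≤ δ / 4 := by
      rw [div_mul_eq_mul_div, div_le_div_iff₀ hε0 (by norm_num : (0:ℝ) < 4)]
      have h6 : γ * (4 * (K + 1)) ≤ ε * δ := by
        have := mul_le_mul_of_nonneg_right hγε (by positivity : (0:ℝ) ≤ 4 * (K + 1))
        rwa [div_mul_cancel₀ _ (by positivity : (4 * (K + 1) : ℝ) ≠ 0)] at this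
      nlinarith [hγ0.le, hK0]
    have hηK : η * K ≤ δ / 4 :=
      le_trans (mul_le_mul_of_nonneg_right hη2 hK0) hγK
    have h7 : (1 - η) * totalWeight w ≤ totalWeight w := by nlinarith
    have h8 : totalWeight w ≤ b.2 := hwt
    have : totalWeight w2 < v := by
      rw [htw2]
      have : b.2 < v - δ / 2 := by linarith
      nlinarith
    linarith
  -- separating functional
  obtain ⟨φ, u, hu1, hu2⟩ :=
    geometric_hahn_banach_point_closed hCconv.closure isClosed_closure hxnot
  have hCsub : ∀ b ∈ C, u < φ b := fun b hb => hu2 b (subset_closure hb)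
  set φ1 : (X × Y) → ℝ := fun p => φ ((Pi.single p 1 : (X × Y) → ℝ), (0 : ℝ)) with hφ1def
  set lam : ℝ := φ ((0 : (X × Y) → ℝ), (1 : ℝ)) with hlamdef
  have hpi : ∀ u0 : (X × Y) → ℝ, u0 = ∑ p : X × Y, u0 p • ((Pi.single p (1:ℝ) : (X × Y) → ℝ)) := by
    intro u0; funext q
    rw [Finset.sum_apply]
    simp only [Pi.smul_apply, smul_eq_mul, Pi.single_apply, mul_ite, mul_one, mul_zero]
    rw [Finset.sum_ite_eq Finset.univ q (fun p => u0 p)]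
    simp
  have hrep : ∀ yt : ((X × Y) → ℝ) × ℝ,
      φ yt = (∑ p : X × Y, yt.1 p * φ1 p) + yt.2 * lam := by
    intro yt
    have hsplit : yt = ((yt.1, (0:ℝ)) : ((X × Y) → ℝ) × ℝ) + ((0 : (X × Y) → ℝ), yt.2) := by
      refine Prod.ext ?_ ?_ <;> simp
    have hdec : ((yt.1, (0:ℝ)) : ((X × Y) → ℝ) × ℝ)
        = ∑ p : X × Y, yt.1 p • (((Pi.single p (1:ℝ) : (X × Y) → ℝ)), (0:ℝ)) := by
      refine Prod.ext ?_ ?_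
      · rw [Prod.fst_sum]
        simp only [Prod.smul_fst]
        exact hpi yt.1
      · rw [Prod.snd_sum]
        simp
    have hdec2 : (((0 : (X × Y) → ℝ), yt.2) : ((X × Y) → ℝ) × ℝ)
        = yt.2 • (((0 : (X × Y) → ℝ)), (1:ℝ)) := by
      refine Prod.ext ?_ ?_ <;> simp
    have e1 : φ ((yt.1, (0:ℝ))) = ∑ p : X × Y, yt.1 p * φ1 p := by
      rw [hdec, map_sum]
      refine Finset.sum_congr rfl fun p _ => ?_
      rw [map_smul, smul_eq_mul]
    have e2 : φ (((0 : (X × Y) → ℝ), yt.2)) = yt.2 * lam := by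
      rw [hdec2, map_smul, smul_eq_mul, hlamdef]
    calc φ yt = φ (((yt.1, (0:ℝ)) : ((X × Y) → ℝ) × ℝ) + ((0 : (X × Y) → ℝ), yt.2)) := by
          rw [← hsplit]
      _ = φ ((yt.1, (0:ℝ))) + φ (((0 : (X × Y) → ℝ), yt.2)) := map_add _ _ _
      _ = (∑ p : X × Y, yt.1 p * φ1 p) + yt.2 * lam := by rw [e1, e2]
  set ν : (X × Y) → ℝ := fun p => -(φ1 p) with hνdef
  -- membership of simple points
  have hC0 : ∀ (y1 : (X × Y) → ℝ) (t : ℝ), (∀ p, y1 p ≤ 0) → 0 ≤ t → (y1, t) ∈ C := by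
    intro y1 t hy1 ht
    refine ⟨fun _ _ => 0, fun _ _ => le_refl 0, ?_, ?_, ?_⟩
    · intro p; simp [coverSum]
    · intro p
      refine le_trans (hy1 p) ?_
      exact gp_nonneg (fun _ _ => le_refl 0) p
    · simpa [totalWeight] using ht
  have hu_neg : u < 0 := by
    have := hCsub _ (hC0 (fun _ => 0) 0 (fun _ => le_refl 0) (le_refl 0))
    rw [hrep] at this
    simpa using this
  have hν0 : ∀ p : X × Y, 0 ≤ ν p := by
    intro p
    by_contra hcon
    push_neg at hcon
    set s : ℝ := u / ν p with hsdef
    have hs0 : 0 < s := div_pos_of_neg_of_neg hu_neg hcon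
    have hmem : (((-s) • (Pi.single p 1 : (X × Y) → ℝ)), (0 : ℝ)) ∈ C := by
      apply hC0
      · intro q
        simp only [Pi.smul_apply, smul_eq_mul, Pi.single_apply, mul_ite, mul_one, mul_zero]
        split <;> linarith
      · exact le_refl 0
    have := hCsub _ hmem
    rw [hrep] at this
    have heval : (∑ q : X × Y, ((-s) • (Pi.single p 1 : (X × Y) → ℝ)) q * φ1 q)
        + (0 : ℝ) * lam = s * ν p := by
      simp only [Pi.smul_apply, smul_eq_mul, Pi.single_apply, zero_mul, add_zero,
        mul_ite, mul_one, mul_zero]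
      have hterms : ∀ q : X × Y, (if q = p then (-s : ℝ) else 0) * φ1 q
          = (if q = p then -s * φ1 q else 0) := by
        intro q; split <;> simp
      rw [Finset.sum_congr rfl (fun q _ => hterms q)]
      rw [Finset.sum_ite_eq' Finset.univ p (fun q => -s * φ1 q)]
      simp only [Finset.mem_univ, if_true, hνdef]
      ring
    rw [heval] at this
    have : u < u := by
      calc u < s * ν p := this
        _ = u := by rw [hsdef, div_mul_cancel₀ _ (ne_of_lt hcon)]
    exact lt_irrefl u this
  have hlam0 : 0 ≤ lam := by
    by_contra hcon
    push_neg at hcon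
    set s : ℝ := u / lam with hsdef
    have hs0 : 0 < s := div_pos_of_neg_of_neg hu_neg hcon
    have hmem : (((fun _ => 0) : (X × Y) → ℝ), s) ∈ C :=
      hC0 _ s (fun _ => le_refl 0) hs0.le
    have := hCsub _ hmem
    rw [hrep] at this
    simp only [zero_mul, Finset.sum_const_zero, zero_add] at this
    have : u < u := by
      calc u < s * lam := this
        _ = u := by rw [hsdef, div_mul_cancel₀ _ (ne_of_lt hcon)]
    exact lt_irrefl u this
  -- the key strict inequality over the feasible cone
  have hstrict : ∀ w : Finset X × Finset Y → Z → ℝ,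
      (∀ R z, 0 ≤ w R z) → (∀ p : X × Y, ∑ z, coverSum w p z ≤ 1) →
      u < -(∑ p : X × Y, ν p * gp S f w p) + totalWeight w * lam := by
    intro w hw0 hw1
    have hmem : (((fun p => gp S f w p) : (X × Y) → ℝ), totalWeight w) ∈ C :=
      ⟨w, hw0, hw1, fun p => le_refl _, le_refl _⟩
    have := hCsub _ hmem
    rw [hrep] at this
    have heq : (∑ p : X × Y, gp S f w p * φ1 p) = -(∑ p : X × Y, ν p * gp S f w p) := by
      have hterms : ∀ p : X × Y, ν p * gp S f w p = -(gp S f w p * φ1 p) := by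
        intro p; simp only [hνdef]; ring
      rw [Finset.sum_congr rfl (fun p _ => hterms p), Finset.sum_neg_distrib, neg_neg]
    rwa [heq] at this
  have hx : -((1 - ε) * ∑ p : X × Y, ν p) + (v - δ) * lam < u := by
    have h9 := hu1
    rw [hrep] at h9
    have heq : (∑ p : X × Y, (1 - ε) * φ1 p) = -((1 - ε) * ∑ p : X × Y, ν p) := by
      have hterms : ∀ p : X × Y, (1 - ε) * φ1 p = -((1 - ε) * ν p) := by
        intro p; simp only [hνdef]; ring
      rw [Finset.sum_congr rfl (fun p _ => hterms p), Finset.sum_neg_distrib,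
        ← Finset.mul_sum]
    rw [heq] at h9
    exact h9
  have hsν : 0 ≤ ∑ p : X × Y, ν p := Finset.sum_nonneg fun p _ => hν0 p
  have hlampos : 0 < lam := by
    rcases eq_or_lt_of_le hlam0 with heq0 | h
    · exfalso
      have h1 := hstrict (wBase f) (wBase_nonneg f)
        (fun p => le_of_eq (sum_coverSum_wBase f p))
      have hsum1 : ∑ p : X × Y, ν p * gp S f (wBase f) p = ∑ p : X × Y, ν p :=
        Finset.sum_congr rfl fun p _ => by rw [gp_wBase, mul_one]
      rw [hsum1, ← heq0] at h1
      rw [← heq0] at hx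
      have hεν : 0 ≤ ε * ∑ p : X × Y, ν p := mul_nonneg hε0.le hsν
      simp only [mul_zero, add_zero] at h1 hx
      nlinarith
    · exact h
  rcases eq_or_lt_of_le hsν with hm | hm
  · -- all ν are zero
    have hall : ∀ p : X × Y, ν p = 0 := by
      intro p
      exact (Finset.sum_eq_zero_iff_of_nonneg (fun q _ => hν0 q)).mp hm.symm p
        (Finset.mem_univ p)
    refine ⟨unif, unif_isProbDist, ?_⟩
    apply le_muPrimalValue S f ε hε0.le unif_isProbDist
    intro w hw
    have h1 := hstrict w hw.1 hw.2.2
    rw [Finset.sum_eq_zero (fun p _ => by rw [hall p, zero_mul])] at h1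
    rw [← hm] at hx
    simp only [mul_zero, zero_mul, neg_zero, zero_add, add_zero] at h1 hx
    have h2 : (v - δ) * lam < totalWeight w * lam := by linarith
    have h3 : v - δ < totalWeight w := (mul_lt_mul_iff_of_pos_right hlampos).mp h2
    linarith
  · -- normalize ν into a probability distribution
    set m : ℝ := ∑ p : X × Y, ν p with hmdef
    set μ : (X × Y) → ℝ := fun p => ν p / m with hμdef
    have hprob : IsProbDist μ := by
      constructor
      · intro p; exact div_nonneg (hν0 p) hm.le
      · rw [hμdef]
        simp only
        rw [← Finset.sum_div, ← hmdef, div_self hm.ne']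
    refine ⟨μ, hprob, ?_⟩
    apply le_muPrimalValue S f ε hε0.le hprob
    intro w hw
    have hcon : 1 - ε ≤ ∑ p : X × Y, μ p * gp S f w p := by
      rw [← sum_mu_gp]; exact hw.2.1
    have hsum : ∑ p : X × Y, ν p * gp S f w p
        = m * ∑ p : X × Y, μ p * gp S f w p := by
      rw [Finset.mul_sum]
      refine Finset.sum_congr rfl fun p _ => ?_
      have hval : μ p = ν p / m := rfl
      rw [hval, ← mul_assoc, mul_comm m (ν p / m), div_mul_cancel₀ _ hm.ne']
    have h1 := hstrict w hw.1 hw.2.2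
    have h2 : m * (1 - ε) ≤ ∑ p : X × Y, ν p * gp S f w p := by
      rw [hsum]; exact mul_le_mul_of_nonneg_left hcon hm.le
    have key : (v - δ) * lam < totalWeight w * lam := by linarith [hx, h1, h2]
    have h3 : v - δ < totalWeight w := (mul_lt_mul_iff_of_pos_right hlampos).mp key
    linarith

lemma muPrimalValue_diff [Nonempty X] [Nonempty Y] (hε0 : 0 < ε)
    (μ μ' : X × Y → ℝ) (hμ : IsProbDist μ) (hμ' : IsProbDist μ') :
    muPrimalValue S f ε μ' ≤ muPrimalValue S f ε μ
      + (∑ p : X × Y, |μ p - μ' p|) * totalWeight (wBase f) / ε := by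
  set K : ℝ := totalWeight (wBase f) with hKdef
  have hK0 : 0 ≤ K := totalWeight_nonneg (wBase_nonneg f)
  set d : ℝ := ∑ p : X × Y, |μ p - μ' p| with hddef
  have hd0 : 0 ≤ d := Finset.sum_nonneg fun p _ => abs_nonneg _
  have key : ∀ w : Finset X × Finset Y → Z → ℝ, MuPrimalFeasible S f ε μ w →
      muPrimalValue S f ε μ' ≤ totalWeight w + d * K / ε := by
    intro w hw
    have hεd : 0 < ε + d := by linarith
    set η : ℝ := d / (ε + d) with hηdef
    have hη0 : 0 ≤ η := div_nonneg hd0 hεd.le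
    have hη1 : η ≤ 1 := by rw [hηdef, div_le_one hεd]; linarith
    have hηe : η * (ε + d) = d := div_mul_cancel₀ _ hεd.ne'
    set w2 : Finset X × Finset Y → Z → ℝ :=
      fun R z => (1 - η) * w R z + η * wBase f R z with hw2def
    have hμcon : 1 - ε ≤ ∑ p : X × Y, μ p * gp S f w p := by
      rw [← sum_mu_gp]; exact hw.2.1
    have hlow : (∑ p : X × Y, μ p * gp S f w p) - d
        ≤ ∑ p : X × Y, μ' p * gp S f w p := by
      have hterm : ∀ p ∈ Finset.univ,
          μ p * gp S f w p - |μ p - μ' p| ≤ μ' p * gp S f w p := by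
        intro p _
        have hg0 : 0 ≤ gp S f w p := gp_nonneg hw.1 p
        have hg1 : gp S f w p ≤ 1 := gp_le_one hw.1 hw.2.2 p
        nlinarith [le_abs_self (μ p - μ' p), neg_abs_le (μ p - μ' p)]
      calc (∑ p : X × Y, μ p * gp S f w p) - d
          = ∑ p : X × Y, (μ p * gp S f w p - |μ p - μ' p|) := by
            rw [Finset.sum_sub_distrib, hddef]
        _ ≤ ∑ p : X × Y, μ' p * gp S f w p := Finset.sum_le_sum hterm
    have hfeas : MuPrimalFeasible S f ε μ' w2 := by
      refine ⟨?_, ?_, ?_⟩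
      · intro R z
        exact add_nonneg (mul_nonneg (by linarith) (hw.1 R z))
          (mul_nonneg hη0 (wBase_nonneg f R z))
      · rw [sum_mu_gp]
        have hgp2 : ∀ p : X × Y, gp S f w2 p = (1 - η) * gp S f w p + η := by
          intro p; rw [hw2def, gp_combo, gp_wBase, mul_one]
        have hexp : ∑ p : X × Y, μ' p * gp S f w2 p
            = (1 - η) * (∑ p : X × Y, μ' p * gp S f w p) + η := by
          rw [Finset.sum_congr rfl (fun p _ => by rw [hgp2 p])]
          have : ∀ p : X × Y, μ' p * ((1 - η) * gp S f w p + η)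
              = (1 - η) * (μ' p * gp S f w p) + η * μ' p := by intro p; ring
          rw [Finset.sum_congr rfl (fun p _ => this p), Finset.sum_add_distrib,
            ← Finset.mul_sum, ← Finset.mul_sum, hμ'.2, mul_one]
        rw [hexp]
        have h5 : 1 - ε - d ≤ ∑ p : X × Y, μ' p * gp S f w p := by linarith
        have h6 : (1 - η) * (1 - ε - d) ≤ (1 - η) * (∑ p : X × Y, μ' p * gp S f w p) :=
          mul_le_mul_of_nonneg_left h5 (by linarith)
        have h7 : (1 - η) * (1 - ε - d) + η = 1 - ε := by linear_combination hηe
        linarith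
      · intro p
        have hsum : ∑ z, coverSum w2 p z
            = (1 - η) * (∑ z, coverSum w p z) + η * (∑ z, coverSum (wBase f) p z) := by
          simp [hw2def, coverSum_combo, Finset.sum_add_distrib, Finset.mul_sum]
        rw [hsum, sum_coverSum_wBase]
        nlinarith [hw.2.2 p]
    have hle := muPrimalValue_le S f ε hfeas
    have htw2 : totalWeight w2 = (1 - η) * totalWeight w + η * K := by
      rw [hw2def, totalWeight_combo, hKdef]
    have hη2 : η ≤ d / ε := by
      apply div_le_div_of_nonneg_left hd0 hε0
      linarith
    have htw0 : 0 ≤ totalWeight w := totalWeight_nonneg hw.1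
    have h8 : (1 - η) * totalWeight w ≤ totalWeight w := by nlinarith
    have h9 : η * K ≤ d / ε * K := mul_le_mul_of_nonneg_right hη2 hK0
    have h10 : d / ε * K = d * K / ε := by ring
    linarith [hle, htw2 ▸ hle]
  have hfin : muPrimalValue S f ε μ' - d * K / ε ≤ muPrimalValue S f ε μ := by
    refine le_csInf (muSet_nonempty S f ε hε0.le μ hμ) ?_
    rintro v ⟨w, hw, rfl⟩
    linarith [key w hw]
  linarith

lemma exists_max_mu [Nonempty X] [Nonempty Y] (hε0 : 0 < ε) :
    ∃ μ : X × Y → ℝ, IsProbDist μ ∧ muPrimalValue S f ε μ = bprt S f ε := by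
  classical
  set Δ : Set ((X × Y) → ℝ) := {μ | IsProbDist μ} with hΔdef
  have hΔne : Δ.Nonempty := ⟨unif, unif_isProbDist⟩
  have hΔclosed : IsClosed Δ := by
    have h1 : Δ = (⋂ p : X × Y, {μ : (X × Y) → ℝ | 0 ≤ μ p})
        ∩ {μ : (X × Y) → ℝ | ∑ p : X × Y, μ p = 1} := by
      ext μ
      simp only [hΔdef, Set.mem_setOf_eq, Set.mem_inter_iff, Set.mem_iInter, IsProbDist]
    rw [h1]
    refine IsClosed.inter (isClosed_iInter fun p => ?_) ?_
    · exact isClosed_le continuous_const (continuous_apply p)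
    · exact isClosed_eq (continuous_finset_sum _ fun p _ => continuous_apply p)
        continuous_const
  have hΔsub : Δ ⊆ Set.Icc (fun _ => (0:ℝ)) (fun _ => (1:ℝ)) := by
    rintro μ ⟨h0, h1⟩
    constructor
    · intro p; exact h0 p
    · intro p
      calc μ p ≤ ∑ q : X × Y, μ q :=
            Finset.single_le_sum (fun q _ => h0 q) (Finset.mem_univ p)
        _ = 1 := h1
  have hcomp : IsCompact Δ := IsCompact.of_isClosed_subset isCompact_Icc hΔclosed hΔsub
  set K : ℝ := totalWeight (wBase f) with hKdef
  have hK0 : 0 ≤ K := totalWeight_nonneg (wBase_nonneg f)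
  set N : ℝ := (Fintype.card (X × Y) : ℝ) with hNdef
  have hN0 : 0 ≤ N := by positivity
  have hcont : ContinuousOn (muPrimalValue S f ε) Δ := by
    rw [Metric.continuousOn_iff]
    intro μ hμ r hr
    refine ⟨r * ε / (N * K + 1), by positivity, ?_⟩
    intro μ' hμ' hdist
    have hd : ∑ p : X × Y, |μ p - μ' p| ≤ N * dist μ' μ := by
      calc ∑ p : X × Y, |μ p - μ' p| ≤ ∑ _p : X × Y, dist μ' μ := by
            refine Finset.sum_le_sum fun p _ => ?_
            rw [abs_sub_comm, ← Real.dist_eq]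
            exact dist_le_pi_dist μ' μ p
        _ = N * dist μ' μ := by
            rw [Finset.sum_const, Finset.card_univ, nsmul_eq_mul, hNdef]
    have hd' : ∑ p : X × Y, |μ' p - μ p| = ∑ p : X × Y, |μ p - μ' p| :=
      Finset.sum_congr rfl fun p _ => abs_sub_comm _ _
    have hdist0 : 0 ≤ dist μ' μ := dist_nonneg
    have hbound : (∑ p : X × Y, |μ p - μ' p|) * K / ε < r := by
      have hd0' : 0 ≤ ∑ p : X × Y, |μ p - μ' p| :=
        Finset.sum_nonneg fun p _ => abs_nonneg _
      have hNK : 0 ≤ N * K := mul_nonneg hN0 hK0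
      have hpos : 0 < N * K + 1 := by linarith
      have h2 : (∑ p : X × Y, |μ p - μ' p|) * K ≤ N * dist μ' μ * K :=
        mul_le_mul_of_nonneg_right hd hK0
      have h3 : N * K * dist μ' μ ≤ N * K * (r * ε / (N * K + 1)) :=
        mul_le_mul_of_nonneg_left hdist.le hNK
      have h4 : N * K * (r * ε / (N * K + 1)) < r * ε := by
        rw [← mul_div_assoc, div_lt_iff₀ hpos]
        have hrε : 0 < r * ε := mul_pos hr hε0
        nlinarith
      have h5 : (∑ p : X × Y, |μ p - μ' p|) * K < r * ε := by nlinarith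
      rw [div_lt_iff₀ hε0]
      linarith
    have b1 := muPrimalValue_diff S f ε hε0 μ μ' hμ hμ'
    have b2 := muPrimalValue_diff S f ε hε0 μ' μ hμ' hμ
    rw [hd'] at b2
    rw [Real.dist_eq, abs_lt]
    constructor
    · linarith
    · linarith
  obtain ⟨μs, hμsΔ, hmax⟩ := hcomp.exists_isMaxOn hΔne hcont
  refine ⟨μs, hμsΔ, ?_⟩
  have hle : muPrimalValue S f ε μs ≤ bprt S f ε :=
    muPrimalValue_le_bprt S f ε hε0.le μs hμsΔ
  have hge : bprt S f ε ≤ muPrimalValue S f ε μs := by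
    by_contra hcon
    push_neg at hcon
    set δ : ℝ := (bprt S f ε - muPrimalValue S f ε μs) / 2 with hδdef
    have hδ0 : 0 < δ := by rw [hδdef]; linarith
    obtain ⟨μ0, hμ0, h0⟩ := exists_mu_near S f ε hε0 hδ0
    have h1 : muPrimalValue S f ε μ0 ≤ muPrimalValue S f ε μs := hmax hμ0
    rw [hδdef] at h0
    linarith
  linarith

end Aux

/-- The maximum over distributions `μ` of the optimal value of the
`μ`-primal program equals the relaxed partition bound `bprt_ε(f)`; every `ε`-feasible
family is feasible for every `μ`-primal program; and there is a distribution `μ*` at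
which the two optimal values coincide. -/
theorem statement_9 {X Y Z : Type*} [Fintype X] [Fintype Y] [Fintype Z]
    [Nonempty X] [Nonempty Y]
    [DecidableEq X] [DecidableEq Y]
    (S : Finset (X × Y)) (f : X × Y → Z) (ε : ℝ) (hε : ε ∈ Set.Icc (0 : ℝ) 1) :
    (∀ μ : X × Y → ℝ, IsProbDist μ →
      ∀ w : Finset X × Finset Y → Z → ℝ, RelaxedFeasible S f ε w →
        MuPrimalFeasible S f ε μ w) ∧
    sSup {v : ℝ | ∃ μ : X × Y → ℝ, IsProbDist μ ∧ v = muPrimalValue S f ε μ}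
      = bprt S f ε ∧
    ∃ μ : X × Y → ℝ, IsProbDist μ ∧ muPrimalValue S f ε μ = bprt S f ε := by
  obtain ⟨hε0, hε1⟩ := hε
  have part1 : ∀ μ : X × Y → ℝ, IsProbDist μ →
      ∀ w : Finset X × Finset Y → Z → ℝ, RelaxedFeasible S f ε w →
        MuPrimalFeasible S f ε μ w := fun μ hμ w hw => relaxed_to_mu S f ε μ hμ w hw
  have part3 : ∃ μ : X × Y → ℝ, IsProbDist μ ∧ muPrimalValue S f ε μ = bprt S f ε := by
    rcases eq_or_lt_of_le hε0 with h0 | h0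
    · rw [← h0]
      exact ⟨unif, unif_isProbDist, eps_zero_value S f⟩
    · exact exists_max_mu S f ε h0
  refine ⟨part1, ?_, part3⟩
  obtain ⟨μs, hμs, heq⟩ := part3
  apply le_antisymm
  · have hne : {v : ℝ | ∃ μ : X × Y → ℝ, IsProbDist μ ∧ v = muPrimalValue S f ε μ}.Nonempty :=
      ⟨muPrimalValue S f ε μs, ⟨μs, hμs, rfl⟩⟩
    apply csSup_le hne
    rintro v ⟨μ, hμ, rfl⟩
    exact muPrimalValue_le_bprt S f ε hε0 μ hμ
  · refine le_csSup ⟨bprt S f ε, ?_⟩ ⟨μs, hμs, heq.symm⟩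
    rintro v ⟨μ, hμ, rfl⟩
    exact muPrimalValue_le_bprt S f ε hε0 μ hμ
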